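/- For j ≥ 2 and α ∈ (1,2), the function h(x) = x/(1-(1-x)^{α-1}) extends continuously to [0,1] with h(1) = 1, and ∫_0^1 x^{j-2}(1-x)^{α-1} h(x) dx ~ Γ(α)·Γ(j-1)/Γ(j-1+α) as j → ∞. Consequently, the limiting hitting probability P(j ∈ R) = (Γ(j-1+α)/(Γ(α)Γ(j-1))) · (α-1) ∫_0^1 x^{j-1}(1-x)^{α-1}/(1-(1-x)^{α-1}) dx converges to α - 1 as j → ∞. -/

import Mathlib

open Real Filter MeasureTheory Set


lemma real_beta (b : ℝ) (hb : 0 < b) (n : ℕ) :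
    ∫ x in Set.Ioo (0:ℝ) 1, x ^ n * (1 - x) ^ (b - 1) =
      Real.Gamma (n + 1) * Real.Gamma b / Real.Gamma (n + 1 + b) := by
  have h := Complex.Gamma_mul_Gamma_eq_betaIntegral
    (s := (n + 1 : ℂ)) (t := (b : ℂ)) (by simp; positivity) (by simpa using hb)
  have hbeta : Complex.betaIntegral (n + 1) b =
      ((∫ x in Set.Ioo (0:ℝ) 1, x ^ n * (1 - x) ^ (b - 1) : ℝ) : ℂ) := by
    rw [Complex.betaIntegral]
    rw [intervalIntegral.integral_of_le (by norm_num : (0:ℝ) ≤ 1),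
      ← MeasureTheory.integral_Ioc_eq_integral_Ioo]
    refine Eq.trans (MeasureTheory.setIntegral_congr_fun measurableSet_Ioc (fun x hx => ?_))
      (integral_ofReal (𝕜 := ℂ))
    have hx0 : 0 < x := hx.1
    have hx1 : x ≤ 1 := hx.2
    have h1 : ((x:ℂ)) ^ ((n:ℂ) + 1 - 1) = ((x ^ n : ℝ) : ℂ) := by
      rw [add_sub_cancel_right, Complex.cpow_natCast]; push_cast; ring
    have h2 : ((1:ℂ) - x) ^ ((b:ℂ) - 1) = (((1 - x) ^ (b - 1) : ℝ) : ℂ) := by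
      rw [show ((1:ℂ) - x) = ((1 - x : ℝ) : ℂ) by push_cast; ring,
        show ((b:ℂ) - 1) = ((b - 1 : ℝ) : ℂ) by push_cast; ring,
        ← Complex.ofReal_cpow (by linarith)]
    push_cast
    rw [h1, h2]
    norm_cast
  rw [hbeta] at h
  have hcast : ∀ y : ℝ, Complex.Gamma (y : ℂ) = (Real.Gamma y : ℂ) := fun y =>
    Complex.Gamma_ofReal y
  have hn1 : ((n:ℂ) + 1) = (((n:ℝ) + 1 : ℝ) : ℂ) := by push_cast; ring
  have hn1b : ((n:ℂ) + 1 + b) = (((n:ℝ) + 1 + b : ℝ) : ℂ) := by push_cast; ring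
  rw [hn1] at h
  rw [show ((((n:ℝ) + 1 : ℝ)) : ℂ) + (b:ℂ) = (((n:ℝ) + 1 + b : ℝ) : ℂ) by push_cast; ring] at h
  rw [hcast, hcast, hcast] at h
  have h' : Real.Gamma ((n:ℝ) + 1) * Real.Gamma b =
      Real.Gamma ((n:ℝ) + 1 + b) * ∫ x in Set.Ioo (0:ℝ) 1, x ^ n * (1 - x) ^ (b - 1) := by
    exact_mod_cast h
  have hpos : 0 < Real.Gamma ((n:ℝ) + 1 + b) := Real.Gamma_pos_of_pos (by positivity)
  field_simp
  linarith [h']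



section
variable {α : ℝ}

lemma gcont (hα1 : 1 < α) : Continuous (fun x : ℝ => (1 - x) ^ (α - 1)) := by
  have h1 : Continuous (fun y : ℝ => y ^ (α - 1)) := by
    rw [continuous_iff_continuousAt]
    intro y
    exact Real.continuousAt_rpow_const y (α - 1) (Or.inr (by linarith))
  exact h1.comp (continuous_const.sub continuous_id)

lemma denom_pos (hα1 : 1 < α) (hα2 : α < 2) {x : ℝ} (hx : x ∈ Set.Ioc (0:ℝ) 1) :
    0 < 1 - (1 - x) ^ (α - 1) := by
  have h : (1 - x) ^ (α - 1) < 1 :=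
    Real.rpow_lt_one (by linarith [hx.2]) (by linarith [hx.1]) (by linarith)
  linarith

noncomputable def Hf (α : ℝ) : ℝ → ℝ :=
  fun x => if x = 0 then (α - 1)⁻¹ else x / (1 - (1 - x) ^ (α - 1))

lemma Hf_one (hα1 : 1 < α) : Hf α 1 = 1 := by
  rw [Hf, if_neg one_ne_zero]
  rw [sub_self, Real.zero_rpow (by linarith : α - 1 ≠ 0)]
  norm_num

lemma Hf_eq (hx : x ≠ 0) : Hf α x = x / (1 - (1 - x) ^ (α - 1)) := if_neg hx

lemma Hf_cont (hα1 : 1 < α) (hα2 : α < 2) : ContinuousOn (Hf α) (Set.Icc 0 1) := by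
  intro x hx
  rcases eq_or_ne x 0 with rfl | hx0
  · -- continuity at 0
    have hD : HasDerivAt (fun y : ℝ => 1 - (1 - y) ^ (α - 1)) (α - 1) 0 := by
      have h1 : HasDerivAt (fun y : ℝ => (1 - y) ^ (α - 1))
          ((α - 1) * (1 - (0:ℝ)) ^ (α - 1 - 1) * (-1)) 0 := by
        have hinner : HasDerivAt (fun y : ℝ => 1 - y) (-1) 0 :=
          (hasDerivAt_id 0).const_sub 1 |>.congr_deriv (by norm_num)
        exact (Real.hasDerivAt_rpow_const (p := α - 1)
          (Or.inl (by norm_num))).comp 0 hinner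
      have := (hasDerivAt_const 0 (1:ℝ)).sub h1
      exact this.congr_deriv (by norm_num [Real.one_rpow])
    have hslope : Tendsto (slope (fun y : ℝ => 1 - (1 - y) ^ (α - 1)) 0)
        (nhdsWithin 0 {(0:ℝ)}ᶜ) (nhds (α - 1)) :=
      hasDerivAt_iff_tendsto_slope.mp hD
    have hinv : Tendsto (fun y => (slope (fun y : ℝ => 1 - (1 - y) ^ (α - 1)) 0 y)⁻¹)
        (nhdsWithin 0 {(0:ℝ)}ᶜ) (nhds (α - 1)⁻¹) :=
      hslope.inv₀ (by linarith)
    apply continuousWithinAt_diff_self.mp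
    show Tendsto (Hf α) _ (nhds (Hf α 0))
    rw [show Hf α 0 = (α - 1)⁻¹ from if_pos rfl]
    refine Tendsto.congr' ?_ (hinv.mono_left (nhdsWithin_mono _ ?_))
    · filter_upwards [eventually_mem_nhdsWithin] with y hy
      have hy0 : y ≠ 0 := hy.2
      rw [slope_def_field, Hf_eq hy0]
      rw [show (1 : ℝ) - 0 = 1 by norm_num, Real.one_rpow, sub_self, sub_zero, inv_div, sub_zero]
    · intro y hy; exact hy.2
  · -- continuity at x ≠ 0
    have hxI : x ∈ Set.Ioc (0:ℝ) 1 := ⟨lt_of_le_of_ne hx.1 (Ne.symm hx0), hx.2⟩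
    have hden := denom_pos hα1 hα2 hxI
    have hf : ContinuousWithinAt (fun y : ℝ => y / (1 - (1 - y) ^ (α - 1)))
        (Set.Icc 0 1) x :=
      continuousWithinAt_id.div
        ((continuous_const.sub (gcont hα1)).continuousWithinAt) hden.ne'
    refine hf.congr_of_eventuallyEq ?_ (Hf_eq hx0)
    have h0 : ∀ᶠ y in nhds x, y ≠ 0 := isOpen_compl_singleton.eventually_mem hx0
    filter_upwards [eventually_nhdsWithin_of_eventually_nhds h0] with y hy
    exact Hf_eq hy
end



section
variable {α : ℝ}

lemma fn_integrable (hα1 : 1 < α) (n : ℕ) {φ : ℝ → ℝ} (hφ : ContinuousOn φ (Set.Icc 0 1)) :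
    IntegrableOn (fun x : ℝ => x ^ n * (1 - x) ^ (α - 1) * φ x) (Set.Ioo 0 1) volume :=
  ((((continuous_pow n).continuousOn.mul (gcont hα1).continuousOn).mul
    hφ).integrableOn_Icc).mono_set Set.Ioo_subset_Icc_self

lemma fn_integrable' (hα1 : 1 < α) (n : ℕ) :
    IntegrableOn (fun x : ℝ => x ^ n * (1 - x) ^ (α - 1)) (Set.Ioo 0 1) volume :=
  (((continuous_pow n).continuousOn.mul (gcont hα1).continuousOn).integrableOn_Icc).mono_set
    Set.Ioo_subset_Icc_self

lemma fn_nonneg (hα1 : 1 < α) (n : ℕ) {x : ℝ} (hx : x ∈ Set.Icc (0:ℝ) 1) :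
    0 ≤ x ^ n * (1 - x) ^ (α - 1) :=
  mul_nonneg (pow_nonneg hx.1 n) (Real.rpow_nonneg (by linarith [hx.2]) _)

lemma B_lower (hα1 : 1 < α) {s : ℝ} (hs0 : 0 < s) (hs1 : s < 1) (n : ℕ) :
    s ^ n * (((1 - s)/2) ^ (α - 1) * ((1 - s)/2)) ≤
      ∫ x in Set.Ioo (0:ℝ) 1, x ^ n * (1 - x) ^ (α - 1) := by
  set m : ℝ := (1 + s)/2 with hm_def
  have hsm : s < m := by rw [hm_def]; linarith
  have hm1 : m < 1 := by rw [hm_def]; linarith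
  have hsub : Set.Ioo s m ⊆ Set.Ioo (0:ℝ) 1 := Set.Ioo_subset_Ioo (le_of_lt hs0) hm1.le
  have step1 : s ^ n * (((1 - s)/2) ^ (α - 1) * ((1 - s)/2)) =
      ∫ _x in Set.Ioo s m, s ^ n * ((1 - s)/2) ^ (α - 1) := by
    rw [setIntegral_const, measureReal_def, Real.volume_Ioo, ENNReal.toReal_ofReal (by linarith), smul_eq_mul]
    rw [hm_def]; ring
  have step2 : (∫ _x in Set.Ioo s m, s ^ n * ((1 - s)/2) ^ (α - 1)) ≤
      ∫ x in Set.Ioo s m, x ^ n * (1 - x) ^ (α - 1) := by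
    refine setIntegral_mono_on (integrableOn_const (by
      rw [Real.volume_Ioo]; exact ENNReal.ofReal_ne_top))
      ((fn_integrable' hα1 n).mono_set hsub) measurableSet_Ioo (fun x hx => ?_)
    have hx1 : 1 - x ≥ (1 - s)/2 := by
      have : x < m := hx.2
      rw [hm_def] at this; linarith
    refine mul_le_mul (pow_le_pow_left₀ hs0.le hx.1.le n)
      (Real.rpow_le_rpow (by linarith) hx1 (by linarith)) (Real.rpow_nonneg (by linarith) _)
      (pow_nonneg (by linarith [hx.1]) n)
  have step3 : (∫ x in Set.Ioo s m, x ^ n * (1 - x) ^ (α - 1)) ≤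
      ∫ x in Set.Ioo (0:ℝ) 1, x ^ n * (1 - x) ^ (α - 1) := by
    refine setIntegral_mono_set (fn_integrable' hα1 n) ?_ (HasSubset.Subset.eventuallyLE hsub)
    exact ae_restrict_of_forall_mem measurableSet_Ioo
      (fun x hx => fn_nonneg hα1 n ⟨hx.1.le, hx.2.le⟩)
  linarith [step2, step3, step1.le, step1.ge]

lemma key (hα1 : 1 < α) (H : ℝ → ℝ) (hH : ContinuousOn H (Set.Icc 0 1)) (h1 : H 1 = 1) :
    Tendsto (fun n : ℕ => (∫ x in Set.Ioo (0:ℝ) 1, x ^ n * (1 - x) ^ (α - 1) * H x) /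
      (∫ x in Set.Ioo (0:ℝ) 1, x ^ n * (1 - x) ^ (α - 1))) atTop (nhds 1) := by
  obtain ⟨M, hM⟩ : ∃ M, ∀ x ∈ Set.Icc (0:ℝ) 1, |H x - 1| ≤ M := by
    obtain ⟨M, hM⟩ := (isCompact_Icc).exists_bound_of_continuousOn
      (hH.sub continuousOn_const)
    exact ⟨M, fun x hx => by simpa using hM x hx⟩
  have hM0 : 0 ≤ M := le_trans (abs_nonneg _) (hM 1 (by norm_num))
  refine Metric.tendsto_nhds.mpr (fun ε hε => ?_)
  have hc1 : ContinuousWithinAt H (Set.Icc 0 1) 1 := hH 1 (by norm_num)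
  rw [Metric.continuousWithinAt_iff] at hc1
  obtain ⟨δ, hδ0, hδ⟩ := hc1 (ε/4) (by linarith)
  set t : ℝ := max (1 - δ/2) (1/2) with ht_def
  have ht0 : (0:ℝ) < t := lt_of_lt_of_le (by norm_num) (le_max_right _ _)
  have ht1 : t < 1 := max_lt (by linarith) (by norm_num)
  set m : ℝ := (1 + t)/2 with hm_def
  have htm : t < m := by rw [hm_def]; linarith
  have hm0 : (0:ℝ) < m := lt_trans ht0 htm
  have hm1 : m < 1 := by rw [hm_def]; linarith
  set c : ℝ := ((1 - m)/2) ^ (α - 1) * ((1 - m)/2) with hc_def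
  have hc0 : 0 < c := by
    have : (0:ℝ) < (1 - m)/2 := by linarith
    exact mul_pos (Real.rpow_pos_of_pos this _) this
  have hr : t/m < 1 := (div_lt_one hm0).2 htm
  have hsmall : Tendsto (fun n : ℕ => (M/c) * (t/m)^n) atTop (nhds 0) := by
    simpa using (tendsto_pow_atTop_nhds_zero_of_lt_one (by positivity) hr).const_mul (M/c)
  filter_upwards [hsmall.eventually_lt_const (show (0:ℝ) < ε/4 by linarith)] with n hn
  set B := ∫ x in Set.Ioo (0:ℝ) 1, x ^ n * (1 - x) ^ (α - 1) with hB_def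
  set I := ∫ x in Set.Ioo (0:ℝ) 1, x ^ n * (1 - x) ^ (α - 1) * H x with hI_def
  have hB_low : m ^ n * c ≤ B := B_lower hα1 hm0 hm1 n
  have hB0 : 0 < B := lt_of_lt_of_le (by positivity) hB_low
  -- split the difference
  have hIB : I - B = ∫ x in Set.Ioo (0:ℝ) 1, x ^ n * (1 - x) ^ (α - 1) * (H x - 1) := by
    rw [hI_def, hB_def, ← integral_sub (fn_integrable hα1 n hH) (fn_integrable' hα1 n)]
    refine setIntegral_congr_fun measurableSet_Ioo (fun x hx => ?_)
    ring
  have habs : |I - B| ≤ ∫ x in Set.Ioo (0:ℝ) 1, |x ^ n * (1 - x) ^ (α - 1) * (H x - 1)| := by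
    rw [hIB]
    exact norm_integral_le_integral_norm (μ := volume.restrict (Set.Ioo (0:ℝ) 1))
        (fun x => x ^ n * (1 - x) ^ (α - 1) * (H x - 1))
  have hsplit_int : (∫ x in Set.Ioo (0:ℝ) 1, |x ^ n * (1 - x) ^ (α - 1) * (H x - 1)|) =
      (∫ x in Set.Ioo (0:ℝ) t, |x ^ n * (1 - x) ^ (α - 1) * (H x - 1)|) +
      ∫ x in Set.Ico t 1, |x ^ n * (1 - x) ^ (α - 1) * (H x - 1)| := by
    rw [← Set.Ioo_union_Ico_eq_Ioo ht0 ht1.le]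
    refine setIntegral_union ?_ measurableSet_Ico ?_ ?_
    · rw [Set.disjoint_left]; rintro x ⟨_, h2⟩ ⟨h3, _⟩; exact absurd h3 (not_le.2 h2)
    · exact ((fn_integrable hα1 n (hH.sub continuousOn_const)).mono_set
        (Set.Ioo_subset_Ioo le_rfl ht1.le)).abs
    · refine ((fn_integrable hα1 n (hH.sub continuousOn_const)).mono_set
        (fun x hx => ⟨lt_of_lt_of_le ht0 hx.1, hx.2⟩)).abs
  -- bound on the left piece
  have hleft : (∫ x in Set.Ioo (0:ℝ) t, |x ^ n * (1 - x) ^ (α - 1) * (H x - 1)|) ≤ M * t ^ n := by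
    have hb : (∫ x in Set.Ioo (0:ℝ) t, |x ^ n * (1 - x) ^ (α - 1) * (H x - 1)|) ≤
        ∫ _x in Set.Ioo (0:ℝ) t, t ^ n * M := by
      refine setIntegral_mono_on (((fn_integrable hα1 n
        (hH.sub continuousOn_const)).mono_set (Set.Ioo_subset_Ioo le_rfl ht1.le)).abs)
        (integrableOn_const (by rw [Real.volume_Ioo]; exact ENNReal.ofReal_ne_top))
        measurableSet_Ioo (fun x hx => ?_)
      have hx01 : x ∈ Set.Icc (0:ℝ) 1 := ⟨hx.1.le, le_trans hx.2.le ht1.le⟩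
      rw [abs_mul, abs_of_nonneg (fn_nonneg hα1 n hx01)]
      refine mul_le_mul ?_ (hM x hx01) (abs_nonneg _) (pow_nonneg ht0.le n)
      calc x ^ n * (1 - x) ^ (α - 1) ≤ t ^ n * 1 := by
            refine mul_le_mul (pow_le_pow_left₀ hx.1.le hx.2.le n)
              (Real.rpow_le_one (by linarith [hx01.2]) (by linarith [hx.1]) (by linarith))
              (Real.rpow_nonneg (by linarith [hx01.2]) _) (pow_nonneg ht0.le n)
        _ = t ^ n := mul_one _
    rw [setIntegral_const, measureReal_def, Real.volume_Ioo, ENNReal.toReal_ofReal (by linarith),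
      smul_eq_mul, sub_zero] at hb
    nlinarith [pow_nonneg ht0.le n, mul_nonneg (pow_nonneg ht0.le n) hM0]
  -- bound on the right piece
  have hright : (∫ x in Set.Ico t 1, |x ^ n * (1 - x) ^ (α - 1) * (H x - 1)|) ≤ (ε/4) * B := by
    have hsub : Set.Ico t (1:ℝ) ⊆ Set.Ioo (0:ℝ) 1 := fun x hx => ⟨lt_of_lt_of_le ht0 hx.1, hx.2⟩
    have hb : (∫ x in Set.Ico t 1, |x ^ n * (1 - x) ^ (α - 1) * (H x - 1)|) ≤
        ∫ x in Set.Ico t 1, (ε/4) * (x ^ n * (1 - x) ^ (α - 1)) := by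
      refine setIntegral_mono_on
        (((fn_integrable hα1 n (hH.sub continuousOn_const)).mono_set hsub).abs)
        (((fn_integrable' hα1 n).mono_set hsub).const_mul _)
        measurableSet_Ico (fun x hx => ?_)
      have hx01 : x ∈ Set.Icc (0:ℝ) 1 := ⟨le_trans ht0.le hx.1, hx.2.le⟩
      have hdist : dist x 1 < δ := by
        rw [Real.dist_eq, abs_of_nonpos (by linarith [hx.2.le])]
        have : 1 - δ/2 ≤ t := le_max_left _ _
        have ht' : t ≤ x := hx.1
        linarith
      have hHx : |H x - 1| ≤ ε/4 := by
        have := hδ hx01 hdist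
        rw [Real.dist_eq, h1] at this
        linarith [this]
      rw [abs_mul, abs_of_nonneg (fn_nonneg hα1 n hx01), mul_comm]
      exact mul_le_mul hHx le_rfl (fn_nonneg hα1 n hx01) (by linarith)
    have hb2 : (∫ x in Set.Ico t 1, (ε/4) * (x ^ n * (1 - x) ^ (α - 1))) =
        (ε/4) * ∫ x in Set.Ico t 1, x ^ n * (1 - x) ^ (α - 1) := integral_const_mul _ _
    have hb3 : (∫ x in Set.Ico t 1, x ^ n * (1 - x) ^ (α - 1)) ≤ B := by
      refine setIntegral_mono_set (fn_integrable' hα1 n) ?_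
        (HasSubset.Subset.eventuallyLE hsub)
      exact ae_restrict_of_forall_mem measurableSet_Ioo
        (fun x hx => fn_nonneg hα1 n ⟨hx.1.le, hx.2.le⟩)
    calc (∫ x in Set.Ico t 1, |x ^ n * (1 - x) ^ (α - 1) * (H x - 1)|) ≤
        (ε/4) * ∫ x in Set.Ico t 1, x ^ n * (1 - x) ^ (α - 1) := by rw [← hb2]; exact hb
      _ ≤ (ε/4) * B := by nlinarith [hb3]
  -- conclude
  have hdiff : |I - B| ≤ M * t ^ n + (ε/4) * B := by
    calc |I - B| ≤ _ := habs
      _ = _ + _ := hsplit_int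
      _ ≤ M * t ^ n + (ε/4) * B := add_le_add hleft hright
  have hfrac : M * t ^ n / B ≤ (M/c) * (t/m) ^ n := by
    have h1' : M * t ^ n / B ≤ M * t ^ n / (m ^ n * c) :=
      div_le_div_of_nonneg_left (by positivity) (by positivity) hB_low
    have h2' : M * t ^ n / (m ^ n * c) = (M/c) * (t/m) ^ n := by
      rw [div_pow t m n, div_mul_div_comm, mul_comm (m ^ n) c]
    linarith [h1', h2'.le, h2'.ge]
  have hdist : dist (I / B) 1 = |I - B| / B := by
    rw [Real.dist_eq, show I / B - 1 = (I - B)/B by field_simp, abs_div, abs_of_pos hB0]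
  rw [hdist]
  have h3 : |I - B| / B ≤ (M * t ^ n + (ε/4) * B) / B := by gcongr
  have h4 : (M * t ^ n + (ε/4) * B) / B = M * t ^ n / B + ε/4 := by
    rw [add_div, mul_div_assoc (ε/4) B B, div_self hB0.ne', mul_one]
  linarith [h3, h4.le, hfrac, hn]
end


theorem stmt_17 (α : ℝ) (hα : α ∈ Set.Ioo (1:ℝ) 2) :
    (∃ H : ℝ → ℝ, ContinuousOn H (Set.Icc 0 1) ∧ H 1 = 1 ∧
      ∀ x ∈ Set.Ioo (0:ℝ) 1, H x = x / (1 - (1 - x) ^ (α - 1))) ∧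
    Tendsto (fun j : ℕ =>
        (∫ x in Set.Ioo (0:ℝ) 1,
            x ^ (j - 2) * (1 - x) ^ (α - 1) * (x / (1 - (1 - x) ^ (α - 1)))) /
          (Real.Gamma α * Real.Gamma ((j : ℝ) - 1) / Real.Gamma ((j : ℝ) - 1 + α)))
      atTop (nhds 1) ∧
    Tendsto (fun j : ℕ =>
        Real.Gamma ((j : ℝ) - 1 + α) / (Real.Gamma α * Real.Gamma ((j : ℝ) - 1)) *
          ((α - 1) * ∫ x in Set.Ioo (0:ℝ) 1,
            x ^ (j - 1) * (1 - x) ^ (α - 1) / (1 - (1 - x) ^ (α - 1))))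
      atTop (nhds (α - 1)) := by
  obtain ⟨hα1, hα2⟩ := hα
  -- the key convergence for the ratio, composed with j ↦ j - 2
  have hkey : Tendsto (fun n : ℕ => (∫ x in Set.Ioo (0:ℝ) 1,
      x ^ n * (1 - x) ^ (α - 1) * Hf α x) /
      (∫ x in Set.Ioo (0:ℝ) 1, x ^ n * (1 - x) ^ (α - 1))) atTop (nhds 1) :=
    key hα1 (Hf α) (Hf_cont hα1 hα2) (Hf_one hα1)
  have hcomp : Tendsto (fun j : ℕ => (∫ x in Set.Ioo (0:ℝ) 1,
      x ^ (j - 2) * (1 - x) ^ (α - 1) * Hf α x) /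
      (∫ x in Set.Ioo (0:ℝ) 1, x ^ (j - 2) * (1 - x) ^ (α - 1))) atTop (nhds 1) :=
    hkey.comp (tendsto_sub_atTop_nat 2)
  -- eventual identification of the statement's function with the above
  have hGamma_eq : ∀ j : ℕ, 2 ≤ j →
      Real.Gamma α * Real.Gamma ((j : ℝ) - 1) / Real.Gamma ((j : ℝ) - 1 + α) =
      ∫ x in Set.Ioo (0:ℝ) 1, x ^ (j - 2) * (1 - x) ^ (α - 1) := by
    intro j hj
    have hcast : ((j - 2 : ℕ) : ℝ) + 1 = (j : ℝ) - 1 := by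
      rw [Nat.cast_sub hj]; push_cast; ring
    rw [real_beta α (by linarith) (j - 2), hcast, mul_comm (Real.Gamma ((j:ℝ) - 1))]
  have hNum_eq : ∀ j : ℕ,
      (∫ x in Set.Ioo (0:ℝ) 1,
        x ^ (j - 2) * (1 - x) ^ (α - 1) * (x / (1 - (1 - x) ^ (α - 1)))) =
      ∫ x in Set.Ioo (0:ℝ) 1, x ^ (j - 2) * (1 - x) ^ (α - 1) * Hf α x := by
    intro j
    refine setIntegral_congr_fun measurableSet_Ioo (fun x hx => ?_)
    rw [Hf_eq (ne_of_gt hx.1)]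
  have hpart2 : Tendsto (fun j : ℕ =>
      (∫ x in Set.Ioo (0:ℝ) 1,
          x ^ (j - 2) * (1 - x) ^ (α - 1) * (x / (1 - (1 - x) ^ (α - 1)))) /
        (Real.Gamma α * Real.Gamma ((j : ℝ) - 1) / Real.Gamma ((j : ℝ) - 1 + α)))
      atTop (nhds 1) := by
    refine hcomp.congr' ?_
    filter_upwards [eventually_ge_atTop 2] with j hj
    rw [hNum_eq j, hGamma_eq j hj]
  refine ⟨⟨Hf α, Hf_cont hα1 hα2, Hf_one hα1, fun x hx => Hf_eq (ne_of_gt hx.1)⟩, hpart2, ?_⟩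
  -- part 3
  have hmul : Tendsto (fun j : ℕ => (α - 1) *
      ((∫ x in Set.Ioo (0:ℝ) 1,
          x ^ (j - 2) * (1 - x) ^ (α - 1) * (x / (1 - (1 - x) ^ (α - 1)))) /
        (Real.Gamma α * Real.Gamma ((j : ℝ) - 1) / Real.Gamma ((j : ℝ) - 1 + α))))
      atTop (nhds (α - 1)) := by
    simpa using hpart2.const_mul (α - 1)
  refine hmul.congr' ?_
  filter_upwards [eventually_ge_atTop 2] with j hj
  have hI : (∫ x in Set.Ioo (0:ℝ) 1,
      x ^ (j - 1) * (1 - x) ^ (α - 1) / (1 - (1 - x) ^ (α - 1))) =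
      ∫ x in Set.Ioo (0:ℝ) 1,
        x ^ (j - 2) * (1 - x) ^ (α - 1) * (x / (1 - (1 - x) ^ (α - 1))) := by
    refine setIntegral_congr_fun measurableSet_Ioo (fun x hx => ?_)
    rw [show j - 1 = (j - 2) + 1 by omega, pow_succ]
    ring
  rw [hI]
  rw [div_div_eq_mul_div]
  ring
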